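/- Let m > 0 and P ∈ ℝ^d. The minimum over k₁,…,kₙ ∈ ℝ^d of the symbol H₀⁽ⁿ⁾(P;k₁,…,kₙ) := ½(P - Σⱼ₌₁ⁿ kⱼ)² + Σⱼ₌₁ⁿ sqrt(m² + |kⱼ|²) is attained at k₁ = … = kₙ = (1/n)(|P| - c(n,P)) P/|P|, where c(n,P) ∈ [0,1) is the unique solution of c = (|P|-c)/sqrt(m²n²+(|P|-c)²), and equals ½ c(n,P)² + sqrt(m²n² + (|P| - c(n,P))²). -/

import Mathlib

private lemma mink2 (x y u v w : ℝ) (hu : 0 ≤ u) (hv : 0 ≤ v)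
    (hw : 0 ≤ w) (hwuv : w ≤ u + v) :
    Real.sqrt ((x + y)^2 + w^2) ≤ Real.sqrt (x^2 + u^2) + Real.sqrt (y^2 + v^2) := by
  have hA := Real.sq_sqrt (by positivity : (0:ℝ) ≤ x^2+u^2)
  have hB := Real.sq_sqrt (by positivity : (0:ℝ) ≤ y^2+v^2)
  have hAn := Real.sqrt_nonneg (x^2+u^2)
  have hBn := Real.sqrt_nonneg (y^2+v^2)
  have hcs : x*y + u*v ≤ Real.sqrt (x^2+u^2) * Real.sqrt (y^2+v^2) := by
    nlinarith [sq_nonneg (x*v - u*y), mul_nonneg hAn hBn]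
  rw [show Real.sqrt (x^2+u^2) + Real.sqrt (y^2+v^2)
      = Real.sqrt ((Real.sqrt (x^2+u^2) + Real.sqrt (y^2+v^2))^2) from
      (Real.sqrt_sq (by positivity)).symm]
  apply Real.sqrt_le_sqrt
  nlinarith

private lemma sum_sqrt_ge {E : Type*} [NormedAddCommGroup E] (m : ℝ)
    {ι : Type*} [DecidableEq ι] (s : Finset ι) (f : ι → E) :
    Real.sqrt ((m * s.card)^2 + ‖∑ i ∈ s, f i‖^2) ≤
      ∑ i ∈ s, Real.sqrt (m^2 + ‖f i‖^2) := by
  induction s using Finset.induction with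
  | empty => simp
  | @insert a s ha ih =>
      rw [Finset.sum_insert ha, Finset.sum_insert ha, Finset.card_insert_of_notMem ha]
      have := mink2 m (m * s.card) (‖f a‖) (‖∑ i ∈ s, f i‖) (‖f a + ∑ i ∈ s, f i‖)
        (norm_nonneg _) (norm_nonneg _) (norm_nonneg _) (norm_add_le _ _)
      calc Real.sqrt ((m * (s.card + 1 : ℕ))^2 + ‖f a + ∑ i ∈ s, f i‖^2)
          = Real.sqrt ((m + m * s.card)^2 + ‖f a + ∑ i ∈ s, f i‖^2) := by
            push_cast; ring_nf
        _ ≤ Real.sqrt (m^2 + ‖f a‖^2) + Real.sqrt ((m * s.card)^2 + ‖∑ i ∈ s, f i‖^2) :=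
            this
        _ ≤ _ := by linarith

theorem min_symbol_nelson
    (d : ℕ) (m : ℝ) (hm : 0 < m) (n : ℕ) (hn : 1 ≤ n)
    (P : EuclideanSpace ℝ (Fin d)) (hP : P ≠ 0)
    (c : ℝ) (hc : c ∈ Set.Ico (0 : ℝ) 1)
    (hceq : c = (‖P‖ - c) / Real.sqrt (m ^ 2 * (n : ℝ) ^ 2 + (‖P‖ - c) ^ 2))
    (kstar : EuclideanSpace ℝ (Fin d))
    (hkstar : kstar = ((‖P‖ - c) / (n : ℝ)) • (‖P‖⁻¹ • P)) :
    (∀ k : Fin n → EuclideanSpace ℝ (Fin d),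
        c ^ 2 / 2 + Real.sqrt (m ^ 2 * (n : ℝ) ^ 2 + (‖P‖ - c) ^ 2) ≤
          ‖P - ∑ j, k j‖ ^ 2 / 2 + ∑ j, Real.sqrt (m ^ 2 + ‖k j‖ ^ 2)) ∧
    ‖P - ∑ _j : Fin n, kstar‖ ^ 2 / 2 + ∑ _j : Fin n, Real.sqrt (m ^ 2 + ‖kstar‖ ^ 2)
      = c ^ 2 / 2 + Real.sqrt (m ^ 2 * (n : ℝ) ^ 2 + (‖P‖ - c) ^ 2) := by
  have hp : (0:ℝ) < ‖P‖ := norm_pos_iff.mpr hP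
  have hn' : (0:ℝ) < (n:ℝ) := by exact_mod_cast Nat.pos_of_ne_zero (by omega)
  set p := ‖P‖ with hpdef
  set t := p - c with htdef
  set R := Real.sqrt (m ^ 2 * (n : ℝ) ^ 2 + t ^ 2) with hRdef
  have hApos : 0 < m ^ 2 * (n:ℝ) ^ 2 := by positivity
  have hRpos : 0 < R := Real.sqrt_pos.mpr (by positivity)
  have hR2 : R ^ 2 = m ^ 2 * (n:ℝ) ^ 2 + t ^ 2 := Real.sq_sqrt (by positivity)
  have hcR : c * R = t := by
    rw [eq_div_iff hRpos.ne'] at hceq; linarith [hceq]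
  have ht : 0 < t := by
    rcases eq_or_lt_of_le hc.1 with h0 | h0
    · exfalso
      rw [← h0, zero_mul] at hcR
      have : p = c := by linarith
      rw [← h0] at this; linarith
    · nlinarith
  constructor
  · intro k
    set S := ∑ j, k j with hSdef
    set s := ‖S‖ with hsdef
    have hs0 : 0 ≤ s := norm_nonneg _
    -- step 1: sum of dispersion relations
    have h1 : Real.sqrt (m ^ 2 * (n:ℝ) ^ 2 + s ^ 2) ≤
        ∑ j, Real.sqrt (m ^ 2 + ‖k j‖ ^ 2) := by
      have := sum_sqrt_ge m Finset.univ k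
      simpa [Finset.card_univ, mul_pow] using this
    -- step 2: tangent line
    have h2 : R + c * (s - t) ≤ Real.sqrt (m ^ 2 * (n:ℝ) ^ 2 + s ^ 2) := by
      have hs2 : 0 ≤ m ^ 2 * (n:ℝ) ^ 2 + s ^ 2 := by positivity
      have hprod : Real.sqrt (m ^ 2 * (n:ℝ) ^ 2 + t ^ 2) *
          Real.sqrt (m ^ 2 * (n:ℝ) ^ 2 + s ^ 2)
          = Real.sqrt ((m ^ 2 * (n:ℝ) ^ 2 + t ^ 2) * (m ^ 2 * (n:ℝ) ^ 2 + s ^ 2)) :=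
        (Real.sqrt_mul (by positivity) _).symm
      have hkey : m ^ 2 * (n:ℝ) ^ 2 + t * s ≤ R * Real.sqrt (m ^ 2 * (n:ℝ) ^ 2 + s ^ 2) := by
        rw [hRdef, hprod]
        rw [show (m ^ 2 * (n:ℝ) ^ 2 + t * s) = Real.sqrt ((m ^ 2 * (n:ℝ) ^ 2 + t * s)^2) from
          (Real.sqrt_sq (by positivity)).symm]
        apply Real.sqrt_le_sqrt
        nlinarith [mul_nonneg hApos.le (sq_nonneg (t - s))]
      have h2' : (R + c * (s - t)) * R = m ^ 2 * (n:ℝ) ^ 2 + t * s := by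
        linear_combination (s - t) * hcR + hR2
      have h2'' : (R + c * (s - t)) * R ≤ Real.sqrt (m ^ 2 * (n:ℝ) ^ 2 + s ^ 2) * R := by
        rw [h2', mul_comm (Real.sqrt (m ^ 2 * (n:ℝ) ^ 2 + s ^ 2)) R]; exact hkey
      exact le_of_mul_le_mul_right h2'' hRpos
    -- step 3: the quadratic part
    have h3 : (p - s) ^ 2 ≤ ‖P - S‖ ^ 2 := by
      have := abs_norm_sub_norm_le P S
      have h4 : |p - s| ^ 2 ≤ ‖P - S‖ ^ 2 := by
        apply pow_le_pow_left₀ (abs_nonneg _) this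
      rwa [sq_abs] at h4
    have h4 : c ^ 2 ≤ (p - s) ^ 2 + 2 * c * (s - t) := by
      rw [htdef]; nlinarith [sq_nonneg (p - s - c)]
    linarith
  · -- equality at kstar
    have hsum : ∑ _j : Fin n, kstar = (n : ℝ) • kstar := by
      rw [Finset.sum_const, Finset.card_univ, Fintype.card_fin]
      exact (Nat.cast_smul_eq_nsmul ℝ n kstar).symm
    have hksnorm : ‖kstar‖ = t / n := by
      rw [hkstar, norm_smul, norm_smul, norm_inv, norm_norm, Real.norm_eq_abs,
        abs_of_pos (div_pos ht hn')]
      field_simp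
    have hPsub : P - ∑ _j : Fin n, kstar = (c / p) • P := by
      rw [hsum, hkstar, smul_smul, smul_smul,
        show (n:ℝ) * (t / n) * p⁻¹ = 1 - c / p by
          rw [htdef]; field_simp,
        sub_smul, one_smul, sub_sub_cancel]
    have hnorm1 : ‖P - ∑ _j : Fin n, kstar‖ = c := by
      rw [hPsub, norm_smul, Real.norm_eq_abs, abs_of_nonneg (div_nonneg hc.1 hp.le)]
      rw [← hpdef]
      field_simp
    have hterm : Real.sqrt (m ^ 2 + ‖kstar‖ ^ 2) = R / n := by
      rw [hksnorm, show m ^ 2 + (t / n) ^ 2 = (m ^ 2 * (n:ℝ) ^ 2 + t ^ 2) / (n:ℝ)^2 by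
        field_simp]
      rw [Real.sqrt_div (by positivity), Real.sqrt_sq hn'.le]
    rw [hnorm1, hterm, Finset.sum_const, Finset.card_univ, Fintype.card_fin,
      nsmul_eq_mul]
    field_simp
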